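/- Let c > 0 and α ∈ (0,1]. There is a constant C = C(c, α) > 0 such that for every continuously differentiable g : ℝ → ℂ with ∫_ℝ |g'(x)|² dx < ∞ and g( ± c·(log(1+n))^α ) = 0 for every integer n ≥ 0, one has |g(x)| ≤ C · e^{−|x|/(2c)} · (∫_ℝ |g'(y)|² dy)^{1/2} for all x ∈ ℝ. -/

import Mathlib

open MeasureTheory

private lemma rpow_subadd {a b p : ℝ} (ha : 0 ≤ a) (hb : 0 ≤ b) (hp : 0 ≤ p) (hp1 : p ≤ 1) :
    (a + b) ^ p ≤ a ^ p + b ^ p := by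
  have h := NNReal.rpow_add_le_add_rpow a.toNNReal b.toNNReal hp hp1
  rw [← Real.toNNReal_add ha hb] at h
  have h2 := NNReal.coe_le_coe.mpr h
  rwa [NNReal.coe_add, NNReal.coe_rpow, NNReal.coe_rpow, NNReal.coe_rpow,
    Real.coe_toNNReal _ (by linarith), Real.coe_toNNReal _ ha, Real.coe_toNNReal _ hb] at h2

private lemma near (c α : ℝ) (hc : 0 < c) (hα0 : 0 < α) (hα1 : α ≤ 1) (x : ℝ) (hx : 0 ≤ x) :
    ∃ n : ℕ, x ≤ c * Real.log (1 + (n:ℝ)) ^ α ∧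
      c * Real.log (1 + (n:ℝ)) ^ α ≤ x + c * Real.exp 1 * Real.exp (-x / c) := by
  set u := x / c with hu_def
  have hu : 0 ≤ u := div_nonneg hx hc.le
  set v := u ^ (1/α : ℝ) with hv_def
  have hv : 0 ≤ v := Real.rpow_nonneg hu _
  set E := Real.exp v with hE_def
  have hE0 : 0 < E := Real.exp_pos v
  set n := ⌊E⌋₊ with hn_def
  have hnE : (n:ℝ) ≤ E := Nat.floor_le hE0.le
  have hEn : E < 1 + n := by have := Nat.lt_floor_add_one E; rw [← hn_def] at this; linarith
  have h1n : (1:ℝ) ≤ 1 + n := le_add_of_nonneg_right (Nat.cast_nonneg n)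
  set L := Real.log (1 + (n:ℝ)) with hL_def
  have hL0 : 0 ≤ L := Real.log_nonneg h1n
  have hvL : v ≤ L := by
    have h := Real.log_le_log hE0 hEn.le
    rwa [Real.log_exp] at h
  have hvαu : v ^ α = u := by
    rw [hv_def, ← Real.rpow_mul hu, one_div, inv_mul_cancel₀ (ne_of_gt hα0), Real.rpow_one]
  have lower : u ≤ L ^ α := by
    rw [← hvαu]; exact Real.rpow_le_rpow hv hvL hα0.le
  have hLup : L ≤ v + 1 / E := by
    have h1 : L ≤ Real.log (1 + E) := Real.log_le_log (by linarith) (by linarith)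
    have h3 : Real.log ((1 + E)/E) ≤ (1 + E)/E - 1 := Real.log_le_sub_one_of_pos (by positivity)
    have h4 : (1 + E)/E - 1 = 1/E := by field_simp; ring
    have h5 : Real.log ((1 + E)/E) = Real.log (1 + E) - v := by
      rw [Real.log_div (by positivity) hE0.ne']
      simp [hE_def, Real.log_exp]
    linarith
  have upper : L ^ α ≤ u + Real.exp (-(α * v)) := by
    have h6 : L ^ α ≤ (v + 1/E) ^ α := Real.rpow_le_rpow hL0 hLup hα0.le
    have h7 : (v + 1/E) ^ α ≤ v ^ α + (1/E) ^ α := rpow_subadd hv (by positivity) hα0.le hα1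
    have h8 : (1/E : ℝ) ^ α = Real.exp (-(α * v)) := by
      rw [one_div, hE_def, ← Real.exp_neg, ← Real.exp_mul]
      ring_nf
    rw [hvαu, h8] at h7
    linarith
  have young : u ≤ α * v + (1 - α) := by
    rcases eq_or_lt_of_le hα1 with h | h
    · have hv1 : v = u := by rw [hv_def, h]; norm_num
      rw [hv1, h]
      linarith
    · have hpq : Real.HolderConjugate (1/α) (1/(1-α)) := by
        refine ⟨?_, by positivity, by rw [one_div]; exact inv_pos.mpr (by linarith)⟩
        · rw [one_div, inv_inv, one_div, inv_inv, inv_one]; ring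
      have hy := Real.young_inequality_of_nonneg hu zero_le_one hpq
      rw [mul_one, Real.one_rpow, one_div α, one_div (1-α)] at hy
      have e1 : u ^ α⁻¹ / α⁻¹ = α * u ^ α⁻¹ := by
        rw [div_eq_mul_inv, inv_inv, mul_comm]
      have e2 : (1:ℝ) / (1 - α)⁻¹ = 1 - α := by
        rw [one_div, inv_inv]
      rw [e1, e2] at hy
      rw [hv_def, one_div]
      linarith [hy]
  have hexp : Real.exp (-(α * v)) ≤ Real.exp 1 * Real.exp (-u) := by
    rw [← Real.exp_add]
    exact Real.exp_le_exp.mpr (by linarith)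
  have hxcu : c * u = x := by rw [hu_def]; field_simp
  have hnu : -x / c = -u := by rw [hu_def, neg_div]
  refine ⟨n, ?_, ?_⟩
  · calc x = c * u := hxcu.symm
      _ ≤ c * L ^ α := mul_le_mul_of_nonneg_left lower hc.le
  · have hstep : c * L ^ α ≤ c * (u + Real.exp 1 * Real.exp (-u)) :=
      mul_le_mul_of_nonneg_left (by linarith [upper, hexp]) hc.le
    have heq : c * (u + Real.exp 1 * Real.exp (-u)) =
        x + c * Real.exp 1 * Real.exp (-x / c) := by
      rw [hnu, mul_add, hxcu]; ring
    linarith [hstep, heq.le, heq.ge]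

private lemma le_sqrt_mul_sqrt {J L I : ℝ} (hL : 0 ≤ L) (hI : 0 ≤ I)
    (h : ∀ l : ℝ, 0 < l → J ≤ l * L / 2 + I / (2 * l)) :
    J ≤ Real.sqrt L * Real.sqrt I := by
  have hRHS : 0 ≤ Real.sqrt L * Real.sqrt I :=
    mul_nonneg (Real.sqrt_nonneg _) (Real.sqrt_nonneg _)
  rcases eq_or_lt_of_le hL with hL0 | hLpos
  · have hJ : J ≤ 0 := by
      refine le_of_forall_pos_le_add fun ε hε => ?_
      have hl : (0:ℝ) < I / (2*ε) + 1 := by positivity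
      have h1 := h _ hl
      have h2 : I / (2 * (I / (2*ε) + 1)) ≤ ε := by
        rw [div_le_iff₀ (by positivity)]
        have : 0 ≤ I / (2*ε) * (2 * ε) := by positivity
        calc I = I / (2*ε) * (2*ε) := by field_simp
          _ ≤ ε * (2 * (I / (2*ε) + 1)) := by nlinarith
      rw [← hL0] at h1
      simpa using le_trans h1 (by linarith)
    linarith
  rcases eq_or_lt_of_le hI with hI0 | hIpos
  · have hJ : J ≤ 0 := by
      refine le_of_forall_pos_le_add fun ε hε => ?_
      have h1 := h (2*ε/L) (by positivity)
      rw [← hI0] at h1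
      have h2 : 2*ε/L * L / 2 = ε := by field_simp
      simpa [h2] using h1
    linarith
  · set s := Real.sqrt L with hs_def
    set t := Real.sqrt I with ht_def
    have hs : 0 < s := Real.sqrt_pos.mpr hLpos
    have ht : 0 < t := Real.sqrt_pos.mpr hIpos
    have hmL : s * s = L := Real.mul_self_sqrt hL
    have hmI : t * t = I := Real.mul_self_sqrt hI
    have h1 := h (t / s) (by positivity)
    have h2 : t / s * L / 2 + I / (2 * (t / s)) = s * t := by
      rw [← hmL, ← hmI]; field_simp; ring
    rw [h2] at h1
    exact h1

private lemma seg_bound {g : ℝ → ℂ} (hg : ContDiff ℝ 1 g)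
    (hint : Integrable (fun x : ℝ => ‖deriv g x‖^2) volume)
    {a b : ℝ} (hab : a ≤ b) :
    ∫ t in Set.Ioc a b, ‖deriv g t‖ ≤
      Real.sqrt (b - a) * Real.sqrt (∫ y : ℝ, ‖deriv g y‖^2) := by
  have hcont : Continuous (deriv g) := hg.continuous_deriv le_rfl
  have hI : 0 ≤ ∫ y : ℝ, ‖deriv g y‖^2 := integral_nonneg fun y => by positivity
  apply le_sqrt_mul_sqrt (by linarith) hI
  intro l hl
  have hmono : ∀ t : ℝ, ‖deriv g t‖ ≤ l / 2 + ‖deriv g t‖^2 / (2*l) := by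
    intro t
    have h2 : 2*l*‖deriv g t‖ ≤ l*l + ‖deriv g t‖^2 := by
      nlinarith [sq_nonneg (‖deriv g t‖ - l)]
    calc ‖deriv g t‖ = (2*l*‖deriv g t‖)/(2*l) := by field_simp
      _ ≤ (l*l + ‖deriv g t‖^2)/(2*l) := by
          exact div_le_div_of_nonneg_right h2 (by positivity) |>.trans_eq rfl
      _ = l/2 + ‖deriv g t‖^2/(2*l) := by field_simp
  have hIOc1 : IntegrableOn (fun t => ‖deriv g t‖) (Set.Ioc a b) volume :=
    hcont.norm.integrableOn_Ioc
  have hIOc2 : IntegrableOn (fun t : ℝ => l/2 + ‖deriv g t‖^2/(2*l)) (Set.Ioc a b) volume := by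
    apply Continuous.integrableOn_Ioc
    continuity
  have hsub : IntegrableOn (fun t : ℝ => ‖deriv g t‖^2) (Set.Ioc a b) volume :=
    hint.integrableOn
  calc ∫ t in Set.Ioc a b, ‖deriv g t‖
      ≤ ∫ t in Set.Ioc a b, (l/2 + ‖deriv g t‖^2/(2*l)) :=
        setIntegral_mono_on hIOc1 hIOc2 measurableSet_Ioc (fun t _ => hmono t)
    _ = (b - a) * (l/2) + (∫ t in Set.Ioc a b, ‖deriv g t‖^2) / (2*l) := by
        rw [integral_add ((integrableOn_const measure_Ioc_lt_top.ne :
            IntegrableOn (fun _ : ℝ => l/2) (Set.Ioc a b) volume))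
          (hsub.div_const _)]
        rw [setIntegral_const, integral_div, Real.volume_real_Ioc_of_le hab, smul_eq_mul]
    _ ≤ l * (b - a) / 2 + (∫ y : ℝ, ‖deriv g y‖^2) / (2*l) := by
        have hle := setIntegral_le_integral (s := Set.Ioc a b) hint (ae_of_all _ fun y => by positivity)
        have h1 : (b - a) * (l/2) = l * (b - a) / 2 := by ring
        rw [h1]
        gcongr

private lemma point_bound {g : ℝ → ℂ} (hg : ContDiff ℝ 1 g)
    (hint : Integrable (fun x : ℝ => ‖deriv g x‖^2) volume)
    {z x : ℝ} (hz : g z = 0) :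
    ‖g x‖ ≤ Real.sqrt |x - z| * Real.sqrt (∫ y : ℝ, ‖deriv g y‖^2) := by
  have hder : ∀ (a b : ℝ), ∀ t ∈ Set.uIcc a b, DifferentiableAt ℝ g t :=
    fun a b t _ => (hg.differentiable one_ne_zero) t
  have hcont : Continuous (deriv g) := hg.continuous_deriv le_rfl
  rcases le_total z x with h | h
  · have hftc : ∫ t in z..x, deriv g t = g x - g z :=
      intervalIntegral.integral_deriv_eq_sub (hder z x) (hcont.intervalIntegrable z x)
    have heq : ‖g x‖ = ‖∫ t in z..x, deriv g t‖ := by rw [hftc, hz, sub_zero]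
    rw [heq]
    calc ‖∫ t in z..x, deriv g t‖ ≤ ∫ t in z..x, ‖deriv g t‖ :=
        intervalIntegral.norm_integral_le_integral_norm h
      _ = ∫ t in Set.Ioc z x, ‖deriv g t‖ := intervalIntegral.integral_of_le h
      _ ≤ Real.sqrt (x - z) * Real.sqrt (∫ y : ℝ, ‖deriv g y‖^2) := seg_bound hg hint h
      _ = Real.sqrt |x - z| * Real.sqrt (∫ y : ℝ, ‖deriv g y‖^2) := by
          rw [abs_of_nonneg (by linarith)]
  · have hftc : ∫ t in x..z, deriv g t = g z - g x :=
      intervalIntegral.integral_deriv_eq_sub (hder x z) (hcont.intervalIntegrable x z)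
    have heq : ‖g x‖ = ‖∫ t in x..z, deriv g t‖ := by
      rw [hftc, hz, zero_sub, norm_neg]
    rw [heq]
    calc ‖∫ t in x..z, deriv g t‖ ≤ ∫ t in x..z, ‖deriv g t‖ :=
        intervalIntegral.norm_integral_le_integral_norm h
      _ = ∫ t in Set.Ioc x z, ‖deriv g t‖ := intervalIntegral.integral_of_le h
      _ ≤ Real.sqrt (z - x) * Real.sqrt (∫ y : ℝ, ‖deriv g y‖^2) := seg_bound hg hint h
      _ = Real.sqrt |x - z| * Real.sqrt (∫ y : ℝ, ‖deriv g y‖^2) := by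
          rw [abs_of_nonpos (by linarith), neg_sub]

theorem stmt10 (c α : ℝ) (hc : 0 < c) (hα : α ∈ Set.Ioc (0:ℝ) 1) :
    ∃ C : ℝ, 0 < C ∧ ∀ g : ℝ → ℂ, ContDiff ℝ 1 g →
      Integrable (fun x : ℝ => ‖deriv g x‖^2) volume →
      (∀ n : ℕ, g (c * Real.log (1 + (n:ℝ)) ^ α) = 0 ∧
        g (-(c * Real.log (1 + (n:ℝ)) ^ α)) = 0) →
      ∀ x : ℝ, ‖g x‖ ≤ C * Real.exp (-|x| / (2*c)) *
        Real.sqrt (∫ y : ℝ, ‖deriv g y‖^2) := by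
  obtain ⟨hα0, hα1⟩ := hα
  refine ⟨Real.sqrt (c * Real.exp 1), Real.sqrt_pos.mpr (by positivity), ?_⟩
  intro g hg hint hzero x
  have hI : 0 ≤ ∫ y : ℝ, ‖deriv g y‖^2 := integral_nonneg fun y => by positivity
  have key : ∃ z : ℝ, g z = 0 ∧ |x - z| ≤ c * Real.exp 1 * Real.exp (-|x| / c) := by
    rcases le_total 0 x with hx | hx
    · obtain ⟨n, h1, h2⟩ := near c α hc hα0 hα1 x hx
      refine ⟨_, (hzero n).1, ?_⟩
      rw [abs_of_nonpos (by linarith), abs_of_nonneg hx]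
      linarith
    · obtain ⟨n, h1, h2⟩ := near c α hc hα0 hα1 (-x) (by linarith)
      refine ⟨-(c * Real.log (1 + (n:ℝ)) ^ α), (hzero n).2, ?_⟩
      rw [neg_neg] at h2
      rw [abs_of_nonpos hx, neg_neg, abs_of_nonneg (by linarith :
        (0:ℝ) ≤ x - -(c * Real.log (1 + (n:ℝ)) ^ α))]
      linarith
  obtain ⟨z, hgz, hdist⟩ := key
  have hb := point_bound hg hint (x := x) hgz
  have hstep : Real.sqrt |x - z| ≤ Real.sqrt (c * Real.exp 1) * Real.exp (-|x| / (2*c)) := by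
    have h1 : Real.sqrt |x - z| ≤ Real.sqrt (c * Real.exp 1 * Real.exp (-|x|/c)) :=
      Real.sqrt_le_sqrt hdist
    have h2 : Real.exp (-|x|/c) = Real.exp (-|x|/(2*c)) * Real.exp (-|x|/(2*c)) := by
      rw [← Real.exp_add]; congr 1; field_simp; ring
    calc Real.sqrt |x - z| ≤ Real.sqrt (c * Real.exp 1 * Real.exp (-|x|/c)) := h1
      _ = Real.sqrt (c * Real.exp 1) * Real.exp (-|x|/(2*c)) := by
          rw [h2, Real.sqrt_mul (by positivity), Real.sqrt_mul_self (Real.exp_nonneg _)]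
  calc ‖g x‖ ≤ Real.sqrt |x - z| * Real.sqrt (∫ y : ℝ, ‖deriv g y‖^2) := hb
    _ ≤ Real.sqrt (c * Real.exp 1) * Real.exp (-|x| / (2*c)) *
        Real.sqrt (∫ y : ℝ, ‖deriv g y‖^2) :=
      mul_le_mul_of_nonneg_right hstep (Real.sqrt_nonneg _)
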